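/- One iteration of the PQSQ mean value algorithm does not increase the PQSQ error: if for the current estimate c ∈ ℝ the index sets R_s = {i : r_s ≤ |x_i − c| < r_{s+1}} are formed and c' = (Σ_s a_s Σ_{i ∈ R_s} x_i)/(Σ_s a_s |R_s|) (assuming the denominator is nonzero), then Σ_i u(x_i − c') ≤ Σ_i u(x_i − c), where u is the PQSQ potential with nonincreasing coefficients a_s and nondecreasing offsets b_s. -/

import Mathlib

/-- One iteration of the PQSQ mean-value algorithm does not increase the PQSQ error:
with index sets `R s = {i : r s ≤ |x i - c| < r (s+1)}` and the update
`c' = (Σ_s a s Σ_{i ∈ R s} x i) / (Σ_s a s |R s|)`, one has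
`Σ_i u (x i - c') ≤ Σ_i u (x i - c)`. -/
theorem pqsq_mean_iteration_decreases (N p : ℕ) (x : Fin N → ℝ) (c : ℝ)
    (r : ℕ → ℝ) (a b : ℕ → ℝ) (u : ℝ → ℝ)
    (hr0 : r 0 = 0)
    (hr : ∀ j k : ℕ, j < k → k ≤ p → r j < r k)
    (ha0 : ∀ s ≤ p, 0 ≤ a s)
    (hadec : ∀ s < p, a (s + 1) ≤ a s)
    (hbinc : ∀ s < p, b s ≤ b (s + 1))
    (hcont : ∀ s < p, b s + a s * (r (s + 1)) ^ 2 = b (s + 1) + a (s + 1) * (r (s + 1)) ^ 2)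
    (hu : ∀ (z : ℝ) (s : ℕ), s < p → r s ≤ |z| → |z| < r (s + 1) → u z = b s + a s * z ^ 2)
    (hup : ∀ z : ℝ, r p ≤ |z| → u z = b p + a p * z ^ 2)
    (humin : ∀ (z : ℝ), ∀ s ≤ p, u z ≤ b s + a s * z ^ 2)
    (R : ℕ → Finset (Fin N))
    (hR : ∀ s < p, R s = Finset.univ.filter fun i => r s ≤ |x i - c| ∧ |x i - c| < r (s + 1))
    (hRp : R p = Finset.univ.filter fun i => r p ≤ |x i - c|)
    (hden : (∑ s ∈ Finset.range (p + 1), a s * (R s).card) ≠ 0) :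
    ∑ i, u (x i -
        (∑ s ∈ Finset.range (p + 1), a s * ∑ i ∈ R s, x i) /
        (∑ s ∈ Finset.range (p + 1), a s * (R s).card))
      ≤ ∑ i, u (x i - c) := by
  set A : ℝ := ∑ s ∈ Finset.range (p + 1), a s * (R s).card with hA
  set B : ℝ := ∑ s ∈ Finset.range (p + 1), a s * ∑ i ∈ R s, x i with hB
  -- monotonicity of r (weak)
  have rmono : ∀ j k : ℕ, j ≤ k → k ≤ p → r j ≤ r k := by
    intro j k hjk hkp
    rcases lt_or_eq_of_le hjk with h | h
    · exact (hr j k h hkp).le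
    · rw [h]
  -- each index lies in exactly one R s
  have hmem : ∀ i : Fin N, ∃! s, s ∈ Finset.range (p + 1) ∧ i ∈ R s := by
    intro i
    set z := |x i - c| with hz
    have hz0 : 0 ≤ z := abs_nonneg _
    by_cases hzp : r p ≤ z
    · refine ⟨p, ⟨Finset.self_mem_range_succ p, ?_⟩, ?_⟩
      · rw [hRp]; simp [hzp]; exact hzp
      · rintro s ⟨hs, hsm⟩
        have hs' : s ≤ p := Nat.lt_succ_iff.mp (Finset.mem_range.mp hs)
        by_contra hne
        have hslt : s < p := lt_of_le_of_ne hs' hne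
        rw [hR s hslt] at hsm
        have := (Finset.mem_filter.mp hsm).2.2
        have : z < r p := lt_of_lt_of_le this (rmono (s+1) p hslt (le_refl p))
        linarith
    · push_neg at hzp
      have hp0 : 0 < p := by
        by_contra h
        push_neg at h
        interval_cases p
        rw [hr0] at hzp; linarith
      have hex : ∃ s, z < r (s + 1) := ⟨p - 1, by rwa [Nat.sub_add_cancel hp0]⟩
      set s₀ := Nat.find hex with hs₀
      have hlt : z < r (s₀ + 1) := Nat.find_spec hex
      have hs₀le : s₀ ≤ p - 1 := Nat.find_min' hex (by rwa [Nat.sub_add_cancel hp0])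
      have hs₀p : s₀ < p := lt_of_le_of_lt hs₀le (Nat.pred_lt hp0.ne')
      have hge : r s₀ ≤ z := by
        rcases Nat.eq_zero_or_pos s₀ with h | h
        · rw [h, hr0]; exact hz0
        · obtain ⟨t, ht⟩ := Nat.exists_eq_succ_of_ne_zero h.ne'
          have := Nat.find_min hex (m := t) (by omega)
          push_neg at this
          rwa [ht]
      refine ⟨s₀, ⟨Finset.mem_range.mpr (by omega), ?_⟩, ?_⟩
      · rw [hR s₀ hs₀p]; simp [hge, hlt]; exact ⟨hge, hlt⟩
      · rintro s ⟨hs, hsm⟩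
        have hs' : s ≤ p := Nat.lt_succ_iff.mp (Finset.mem_range.mp hs)
        have hslt : s < p := by
          rcases lt_or_eq_of_le hs' with h | h
          · exact h
          · exfalso; rw [h, hRp] at hsm
            have := (Finset.mem_filter.mp hsm).2
            linarith
        rw [hR s hslt] at hsm
        obtain ⟨_, h1, h2⟩ := Finset.mem_filter.mp hsm
        by_contra hne
        rcases lt_or_gt_of_ne hne with h | h
        · have : r (s + 1) ≤ r s₀ := rmono (s+1) s₀ h hs₀p.le
          linarith
        · have : r (s₀ + 1) ≤ r s := rmono (s₀+1) s h hslt.le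
          linarith
  -- resum over the partition
  have key : ∀ g : Fin N → ℝ,
      ∑ s ∈ Finset.range (p + 1), ∑ i ∈ R s, g i = ∑ i, g i := by
    intro g
    have h1 : ∀ s ∈ Finset.range (p + 1),
        ∑ i ∈ R s, g i = ∑ i, if i ∈ R s then g i else 0 := by
      intro s _
      rw [Finset.sum_ite_mem, Finset.univ_inter]
    rw [Finset.sum_congr rfl h1, Finset.sum_comm]
    refine Finset.sum_congr rfl fun i _ => ?_
    obtain ⟨s₀, ⟨hs₀r, hs₀m⟩, huniq⟩ := hmem i
    rw [Finset.sum_eq_single_of_mem s₀ hs₀r]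
    · simp [hs₀m]
    · intro s hs hne
      simp only [ite_eq_right_iff]
      intro hm
      exact absurd (huniq s ⟨hs, hm⟩) hne
  -- quadratic expansion of the majorant
  have expand : ∀ t : ℝ,
      ∑ s ∈ Finset.range (p + 1), ∑ i ∈ R s, (b s + a s * (x i - t) ^ 2)
        = (∑ s ∈ Finset.range (p + 1), ∑ i ∈ R s, (b s + a s * (x i) ^ 2))
          - 2 * B * t + A * t ^ 2 := by
    intro t
    have h2 : 2 * B * t
        = ∑ s ∈ Finset.range (p + 1), 2 * (a s * ∑ i ∈ R s, x i) * t := by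
      rw [hB, Finset.mul_sum, Finset.sum_mul]
    have h3 : A * t ^ 2 = ∑ s ∈ Finset.range (p + 1), a s * (R s).card * t ^ 2 := by
      rw [hA, Finset.sum_mul]
    rw [h2, h3, ← Finset.sum_sub_distrib, ← Finset.sum_add_distrib]
    refine Finset.sum_congr rfl fun s _ => ?_
    have hs1 : 2 * (a s * ∑ i ∈ R s, x i) * t = ∑ i ∈ R s, 2 * (a s * x i) * t := by
      rw [Finset.mul_sum, Finset.mul_sum, Finset.sum_mul]
    have hs2 : a s * (R s).card * t ^ 2 = ∑ i ∈ R s, a s * t ^ 2 := by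
      rw [Finset.sum_const, nsmul_eq_mul]; ring
    rw [hs1, hs2, ← Finset.sum_sub_distrib, ← Finset.sum_add_distrib]
    exact Finset.sum_congr rfl fun i _ => by ring
  have hAnn : 0 ≤ A := by
    rw [hA]
    refine Finset.sum_nonneg fun s hs => ?_
    exact mul_nonneg (ha0 s (Nat.lt_succ_iff.mp (Finset.mem_range.mp hs))) (Nat.cast_nonneg _)
  have hApos : 0 < A := lt_of_le_of_ne hAnn (Ne.symm hden)
  -- step 1 : majorization at B/A
  have step1 : ∑ i, u (x i - B / A)
      ≤ ∑ s ∈ Finset.range (p + 1), ∑ i ∈ R s, (b s + a s * (x i - B / A) ^ 2) := by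
    rw [← key (fun i => u (x i - B / A))]
    refine Finset.sum_le_sum fun s hs => Finset.sum_le_sum fun i _ => ?_
    exact humin _ s (Nat.lt_succ_iff.mp (Finset.mem_range.mp hs))
  -- step 2 : the quadratic decreases
  have step2 : ∑ s ∈ Finset.range (p + 1), ∑ i ∈ R s, (b s + a s * (x i - B / A) ^ 2)
      ≤ ∑ s ∈ Finset.range (p + 1), ∑ i ∈ R s, (b s + a s * (x i - c) ^ 2) := by
    rw [expand, expand]
    have h : A * c ^ 2 - 2 * B * c - (A * (B / A) ^ 2 - 2 * B * (B / A))
        = (A * c - B) ^ 2 / A := by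
      field_simp
      ring
    linarith [h, div_nonneg (sq_nonneg (A * c - B)) hAnn]
  -- step 3 : equality at c
  have step3 : ∑ s ∈ Finset.range (p + 1), ∑ i ∈ R s, (b s + a s * (x i - c) ^ 2)
      = ∑ i, u (x i - c) := by
    rw [← key (fun i => u (x i - c))]
    refine Finset.sum_congr rfl fun s hs => Finset.sum_congr rfl fun i hi => ?_
    have hs' : s ≤ p := Nat.lt_succ_iff.mp (Finset.mem_range.mp hs)
    rcases lt_or_eq_of_le hs' with h | h
    · rw [hR s h] at hi
      obtain ⟨_, h1, h2⟩ := Finset.mem_filter.mp hi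
      exact (hu _ s h h1 h2).symm
    · subst h
      rw [hRp] at hi
      exact (hup _ (Finset.mem_filter.mp hi).2).symm
  calc ∑ i, u (x i - B / A)
      ≤ ∑ s ∈ Finset.range (p + 1), ∑ i ∈ R s, (b s + a s * (x i - B / A) ^ 2) := step1
    _ ≤ ∑ s ∈ Finset.range (p + 1), ∑ i ∈ R s, (b s + a s * (x i - c) ^ 2) := step2
    _ = ∑ i, u (x i - c) := step3
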